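/- arXiv:2407.08295 — 8 statements merged into one kernel-verified Lean document; each statement's English description precedes it below -/
import Mathlib

section
/- Let r > 0, let P ⊂ ℝ^d be a finite set, let F ⊂ ℝ^d be a finite set of centers, and let c ∈ F be such that F ∖ {c} is nonempty. Suppose cost_r(P, F) < r and dist(p, c) > 2r for every p ∈ P. Then cost_r(P, F ∖ {c}) = cost_r(P, F). (Minimality argument in the proof of Lemma 2.2: a center with no point of P within distance 2r can be deleted without changing the cost, so a minimal optimal solution has every center within 2r of some point.) -/
open Classical in
/-- Minimality argument in the proof of Lemma 2.2: if `cost_r(P, F) < r` and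
some center `c ∈ F` has no point of `P` within distance `2r`, then deleting
`c` does not change the cost. -/
theorem remove_useless_center {d : ℕ} (r : ℝ) (hr : 0 < r)
    (P F : Finset (EuclideanSpace ℝ (Fin d)))
    (c : EuclideanSpace ℝ (Fin d)) (hc : c ∈ F)
    (hF' : (F.erase c).Nonempty)
    (hcost : ∑ p ∈ P, F.inf' ⟨c, hc⟩ (fun c' => max (dist p c' - r) 0) < r)
    (hfar : ∀ p ∈ P, dist p c > 2 * r) :
    ∑ p ∈ P, (F.erase c).inf' hF' (fun c' => max (dist p c' - r) 0) =
      ∑ p ∈ P, F.inf' ⟨c, hc⟩ (fun c' => max (dist p c' - r) 0) := by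
  apply Finset.sum_congr rfl
  intro p hp
  -- each summand is nonneg, so each is ≤ the sum < r
  have hnonneg : ∀ q ∈ P, 0 ≤ F.inf' ⟨c, hc⟩ (fun c' => max (dist q c' - r) 0) := by
    intro q _
    obtain ⟨c', hc', he⟩ := F.exists_mem_eq_inf' ⟨c, hc⟩ (fun c' => max (dist q c' - r) 0)
    rw [he]; exact le_max_right _ _
  have hlt : F.inf' ⟨c, hc⟩ (fun c' => max (dist p c' - r) 0) < r :=
    lt_of_le_of_lt (Finset.single_le_sum hnonneg hp) hcost
  -- the inf over F is attained at some c' ≠ c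
  obtain ⟨c', hc', he⟩ := F.exists_mem_eq_inf' ⟨c, hc⟩ (fun c' => max (dist p c' - r) 0)
  have hne : c' ≠ c := by
    intro h
    subst h
    have := hfar p hp
    have : r < max (dist p c' - r) 0 := by
      have : r < dist p c' - r := by linarith
      exact lt_max_of_lt_left this
    rw [← he] at this
    linarith
  refine le_antisymm ?_ (Finset.le_inf' hF' _ fun b hb => Finset.inf'_le _ (Finset.mem_of_mem_erase hb))
  rw [he]
  exact Finset.inf'_le _ (Finset.mem_erase.mpr ⟨hne, hc'⟩)
end

section
/- Let r ≥ 0 and ε ≥ 0, let P ⊂ ℝ^d be finite, let F ⊂ ℝ^d be finite and nonempty, let c ∈ F, and let c̃ ∈ ℝ^d satisfy dist(c, c̃) ≤ ε·r. Then cost_{(1+ε)r}(P, (F ∖ {c}) ∪ {c̃}) ≤ cost_r(P, F). (Single-center swap inequality underlying Claim 2.5: replacing one center by a point within distance εr of it, while enlarging the radius to (1+ε)r, does not increase the clustering cost.) -/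
open Classical in
/-- Single-center swap inequality underlying Claim 2.5: replacing one center
`c ∈ F` by a point `ct` within distance `ε·r` of it, while enlarging the
radius to `(1+ε)·r`, does not increase the clustering cost. -/
theorem single_center_swap {d : ℕ} (r ε : ℝ) (hr : 0 ≤ r) (hε : 0 ≤ ε)
    (P F : Finset (EuclideanSpace ℝ (Fin d))) (hF : F.Nonempty)
    (c : EuclideanSpace ℝ (Fin d)) (hc : c ∈ F)
    (ct : EuclideanSpace ℝ (Fin d)) (h : dist c ct ≤ ε * r) :
    ∑ p ∈ P, (insert ct (F.erase c)).inf' (Finset.insert_nonempty _ _)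
        (fun x => max (dist p x - (1 + ε) * r) 0) ≤
      ∑ p ∈ P, F.inf' hF (fun x => max (dist p x - r) 0) := by
  apply Finset.sum_le_sum
  intro p _
  obtain ⟨x, hx, hxe⟩ := Finset.exists_mem_eq_inf' hF (fun x => max (dist p x - r) 0)
  rw [hxe]
  by_cases hxc : x = c
  · apply Finset.inf'_le_of_le _ (Finset.mem_insert_self _ _)
    have : dist p ct ≤ dist p c + ε * r := le_trans (dist_triangle p c ct) (by linarith)
    subst hxc
    exact max_le_max (by linarith) le_rfl
  · apply Finset.inf'_le_of_le _ (Finset.mem_insert_of_mem (Finset.mem_erase.mpr ⟨hxc, hx⟩))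
    have hεr : 0 ≤ ε * r := mul_nonneg hε hr
    apply max_le_max _ le_rfl
    linarith
end

section
/- Let r ≥ 0 and ε ≥ 0, let P ⊂ ℝ^d be finite, and let F*, F ⊂ ℝ^d be finite nonempty sets of centers such that for every c* ∈ F* there exists c ∈ F with dist(c*, c) ≤ ε·r. Then cost_{(1+ε)r}(P, F) ≤ cost_r(P, F*). (Grid-replacement argument concluding Lemma 2.2: if every optimal center has a candidate center within distance εr, the candidate set with radius (1+ε)r costs no more than the optimum with radius r.) -/
/-- Grid-replacement argument concluding Lemma 2.2: if every center of `F*`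
has a candidate center of `F` within distance `ε·r`, then the candidate set
`F` with radius `(1+ε)·r` costs no more than `F*` with radius `r`. -/
theorem grid_replacement {d : ℕ} (r ε : ℝ) (hr : 0 ≤ r) (hε : 0 ≤ ε)
    (P Fstar F : Finset (EuclideanSpace ℝ (Fin d)))
    (hFs : Fstar.Nonempty) (hF : F.Nonempty)
    (h : ∀ cs ∈ Fstar, ∃ c ∈ F, dist cs c ≤ ε * r) :
    ∑ p ∈ P, F.inf' hF (fun x => max (dist p x - (1 + ε) * r) 0) ≤
      ∑ p ∈ P, Fstar.inf' hFs (fun x => max (dist p x - r) 0) := by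
  refine Finset.sum_le_sum fun p _ => ?_
  obtain ⟨cs, hcs, hmin⟩ := Fstar.exists_mem_eq_inf' hFs (fun x => max (dist p x - r) 0)
  obtain ⟨c, hc, hdc⟩ := h cs hcs
  rw [hmin]
  refine le_trans (Finset.inf'_le _ hc) ?_
  have : dist p c ≤ dist p cs + ε * r := by
    calc dist p c ≤ dist p cs + dist cs c := dist_triangle p cs c
    _ ≤ dist p cs + ε * r := by linarith
  apply max_le _ (le_max_right _ _)
  calc dist p c - (1 + ε) * r ≤ dist p cs - r := by ring_nf; linarith
    _ ≤ max (dist p cs - r) 0 := le_max_left _ _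
end

section
/- Let 0 < ε < 1, r ≥ 0, k ≥ 1, and let P ⊂ ℝ^d be a finite set of n points. Let F*_r ⊂ ℝ^d be an optimal solution for radius r, i.e., F*_r is finite nonempty with |F*_r| ≤ k and cost_r(P, F*_r) ≤ cost_r(P, F') for every finite nonempty F' ⊂ ℝ^d with |F'| ≤ k; let F*_0 be defined analogously with r replaced by 0. If cost_r(P, F*_r) ≥ 2nr/ε, then cost_0(P, F*_0) ≤ (1 + ε/2)·cost_r(P, F*_r) and cost_r(P, F*_r) ≤ cost_0(P, F*_0). (First part of Lemma 2.3: when r is tiny compared to the optimum, the optimal k-median cost is within a 1+ε/2 factor of the optimal hybrid cost.) -/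
/-- First part of Lemma 2.3: if `OPT_r ≥ 2nr/ε`, then the optimal k-median
cost `OPT_0` satisfies `OPT_0 ≤ (1 + ε/2)·OPT_r` and `OPT_r ≤ OPT_0`. -/
theorem hybrid_vs_median_opt {d : ℕ} (ε r : ℝ) (hε0 : 0 < ε) (hε1 : ε < 1)
    (hr : 0 ≤ r) (k : ℕ) (hk : 1 ≤ k)
    (P Fr F0 : Finset (EuclideanSpace ℝ (Fin d)))
    (hFr : Fr.Nonempty) (hF0 : F0.Nonempty)
    (hFrk : Fr.card ≤ k) (hF0k : F0.card ≤ k)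
    (hFropt : ∀ F' : Finset (EuclideanSpace ℝ (Fin d)), (h' : F'.Nonempty) →
      F'.card ≤ k →
      ∑ p ∈ P, Fr.inf' hFr (fun c => max (dist p c - r) 0) ≤
        ∑ p ∈ P, F'.inf' h' (fun c => max (dist p c - r) 0))
    (hF0opt : ∀ F' : Finset (EuclideanSpace ℝ (Fin d)), (h' : F'.Nonempty) →
      F'.card ≤ k →
      ∑ p ∈ P, F0.inf' hF0 (fun c => dist p c) ≤
        ∑ p ∈ P, F'.inf' h' (fun c => dist p c))
    (hbig : 2 * P.card * r / ε ≤
      ∑ p ∈ P, Fr.inf' hFr (fun c => max (dist p c - r) 0)) :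
    (∑ p ∈ P, F0.inf' hF0 (fun c => dist p c) ≤
      (1 + ε / 2) * ∑ p ∈ P, Fr.inf' hFr (fun c => max (dist p c - r) 0)) ∧
    (∑ p ∈ P, Fr.inf' hFr (fun c => max (dist p c - r) 0) ≤
      ∑ p ∈ P, F0.inf' hF0 (fun c => dist p c)) := by
  set OPTr := ∑ p ∈ P, Fr.inf' hFr (fun c => max (dist p c - r) 0) with hOPTr
  have h2 : OPTr ≤ ∑ p ∈ P, F0.inf' hF0 (fun c => dist p c) := by
    calc OPTr ≤ ∑ p ∈ P, F0.inf' hF0 (fun c => max (dist p c - r) 0) :=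
          hFropt F0 hF0 hF0k
      _ ≤ ∑ p ∈ P, F0.inf' hF0 (fun c => dist p c) := by
          apply Finset.sum_le_sum
          intro p _
          obtain ⟨c, hc, hceq⟩ := F0.exists_mem_eq_inf' hF0 (fun c => dist p c)
          rw [hceq]
          exact le_trans (Finset.inf'_le _ hc)
            (max_le (by linarith [dist_nonneg (x := p) (y := c)]) dist_nonneg)
  refine ⟨?_, h2⟩
  have h1 : ∑ p ∈ P, F0.inf' hF0 (fun c => dist p c) ≤ OPTr + P.card * r := by
    calc ∑ p ∈ P, F0.inf' hF0 (fun c => dist p c)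
        ≤ ∑ p ∈ P, Fr.inf' hFr (fun c => dist p c) := hF0opt Fr hFr hFrk
      _ ≤ ∑ p ∈ P, (Fr.inf' hFr (fun c => max (dist p c - r) 0) + r) := by
          apply Finset.sum_le_sum
          intro p _
          obtain ⟨c, hc, hceq⟩ := Fr.exists_mem_eq_inf' hFr (fun c => max (dist p c - r) 0)
          rw [hceq]
          calc Fr.inf' hFr (fun c => dist p c) ≤ dist p c := Finset.inf'_le _ hc
            _ ≤ max (dist p c - r) 0 + r := by
                rcases le_or_gt (dist p c) r with h | h
                · simpa using le_trans h (by simp [le_max_right])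
                · rw [max_eq_left (by linarith)]; linarith
      _ = OPTr + P.card * r := by rw [Finset.sum_add_distrib]; simp [mul_comm]; rfl
  have hnr : (P.card : ℝ) * r ≤ ε / 2 * OPTr := by
    have := hbig
    rw [div_le_iff₀ hε0] at this
    nlinarith
  linarith
end

section
/- Let 0 < ε < 1, r ≥ 0, k ≥ 1, and let P ⊂ ℝ^d be a finite set of n points. Let F*_r and F*_0 be optimal solutions of size at most k for radius r and radius 0 respectively (as in Lemma 2.3), and suppose cost_r(P, F*_r) ≥ 2nr/ε. If F ⊂ ℝ^d is finite nonempty with |F| ≤ k and cost_0(P, F) ≤ (1 + ε/3)·cost_0(P, F*_0), then cost_r(P, F) ≤ (1 + ε)·cost_r(P, F*_r). (Second part of Lemma 2.3: a (1+ε/3)-approximate k-median solution is a (1+ε)-approximate hybrid solution when r ≤ ε·OPT_r/(2n).) -/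
/-- Second part of Lemma 2.3: when `OPT_r ≥ 2nr/ε`, any `(1 + ε/3)`-approximate
k-median solution `F` of size at most `k` is a `(1 + ε)`-approximate hybrid
solution. -/
theorem approx_median_gives_approx_hybrid {d : ℕ} (ε r : ℝ)
    (hε0 : 0 < ε) (hε1 : ε < 1) (hr : 0 ≤ r) (k : ℕ) (hk : 1 ≤ k)
    (P Fr F0 : Finset (EuclideanSpace ℝ (Fin d)))
    (hFr : Fr.Nonempty) (hF0 : F0.Nonempty)
    (hFrk : Fr.card ≤ k) (hF0k : F0.card ≤ k)
    (hFropt : ∀ F' : Finset (EuclideanSpace ℝ (Fin d)), (h' : F'.Nonempty) →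
      F'.card ≤ k →
      ∑ p ∈ P, Fr.inf' hFr (fun c => max (dist p c - r) 0) ≤
        ∑ p ∈ P, F'.inf' h' (fun c => max (dist p c - r) 0))
    (hF0opt : ∀ F' : Finset (EuclideanSpace ℝ (Fin d)), (h' : F'.Nonempty) →
      F'.card ≤ k →
      ∑ p ∈ P, F0.inf' hF0 (fun c => dist p c) ≤
        ∑ p ∈ P, F'.inf' h' (fun c => dist p c))
    (hbig : 2 * P.card * r / ε ≤
      ∑ p ∈ P, Fr.inf' hFr (fun c => max (dist p c - r) 0))
    (F : Finset (EuclideanSpace ℝ (Fin d))) (hF : F.Nonempty) (hFk : F.card ≤ k)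
    (happrox : ∑ p ∈ P, F.inf' hF (fun c => dist p c) ≤
      (1 + ε / 3) * ∑ p ∈ P, F0.inf' hF0 (fun c => dist p c)) :
    ∑ p ∈ P, F.inf' hF (fun c => max (dist p c - r) 0) ≤
      (1 + ε) * ∑ p ∈ P, Fr.inf' hFr (fun c => max (dist p c - r) 0) := by
  set A := ∑ p ∈ P, Fr.inf' hFr (fun c => max (dist p c - r) 0) with hA
  -- cost_r(P,F) ≤ cost_0(P,F)
  have h1 : ∑ p ∈ P, F.inf' hF (fun c => max (dist p c - r) 0) ≤
      ∑ p ∈ P, F.inf' hF (fun c => dist p c) := by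
    apply Finset.sum_le_sum
    intro p _
    apply Finset.le_inf'
    intro c hc
    exact le_trans (Finset.inf'_le _ hc)
      (max_le (sub_le_self _ hr) dist_nonneg)
  -- cost_0(P,F0) ≤ cost_0(P,Fr)
  have h2 := hF0opt Fr hFr hFrk
  -- cost_0(P,Fr) ≤ A + n r
  have h3 : ∑ p ∈ P, Fr.inf' hFr (fun c => dist p c) ≤ A + P.card * r := by
    have : ∀ p ∈ P, Fr.inf' hFr (fun c => dist p c) ≤
        Fr.inf' hFr (fun c => max (dist p c - r) 0) + r := by
      intro p _
      obtain ⟨c, hc, hcmin⟩ := Fr.exists_mem_eq_inf' hFr (fun c => max (dist p c - r) 0)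
      rw [hcmin]
      exact le_trans (Finset.inf'_le _ hc) (by simp [max_def]; split <;> nlinarith)
    calc ∑ p ∈ P, Fr.inf' hFr (fun c => dist p c)
        ≤ ∑ p ∈ P, (Fr.inf' hFr (fun c => max (dist p c - r) 0) + r) :=
          Finset.sum_le_sum this
      _ = A + P.card * r := by rw [Finset.sum_add_distrib]; simp [hA, mul_comm]
  -- n r ≤ ε A / 2
  have hnr : (P.card : ℝ) * r ≤ ε * A / 2 := by
    rw [div_le_iff₀ hε0] at hbig; nlinarith
  have hA0 : 0 ≤ A := Finset.sum_nonneg fun p _ => by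
    obtain ⟨c, hc, hcmin⟩ := Fr.exists_mem_eq_inf' hFr (fun c => max (dist p c - r) 0)
    rw [hcmin]; exact le_max_right _ _
  have h4 : ∑ p ∈ P, F.inf' hF (fun c => dist p c) ≤ (1 + ε / 3) * (A + P.card * r) :=
    happrox.trans (mul_le_mul_of_nonneg_left (h2.trans h3) (by linarith))
  nlinarith [h1, h4, hnr, hA0, mul_nonneg (mul_nonneg hε0.le (by linarith : (0:ℝ) ≤ 1 - ε)) hA0]
end

section
/- Let 0 < δ < 1/2 and r ≥ 0, let c, c' ∈ ℝ^d with t := dist(c, c') > 16r, and let D, N ⊂ ℝ^d be finite sets such that dist(p, c') ≥ t/4 for every p ∈ D, and |N| ≤ (δ²/4)·|D|. Then ∑_{p ∈ N} d_r(p, c') ≤ δ·∑_{p ∈ D} d_r(p, c') + (1 + δ)·∑_{p ∈ N} d_r(p, c). (Claim 2.7, the tiny-cluster reassignment bound: a small cluster N around a faraway center c can be reassigned to the already-chosen center c' at small extra cost.) -/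
/-- Claim 2.7, the tiny-cluster reassignment bound: a small cluster `N` around
a faraway center `c` can be reassigned to the already-chosen center `c'` at
small extra cost:
`∑_{p ∈ N} d_r(p, c') ≤ δ·∑_{p ∈ D} d_r(p, c') + (1 + δ)·∑_{p ∈ N} d_r(p, c)`. -/
theorem tiny_cluster_reassignment {d : ℕ} (δ r : ℝ)
    (hδ0 : 0 < δ) (hδ1 : δ < 1 / 2) (hr : 0 ≤ r)
    (c c' : EuclideanSpace ℝ (Fin d)) (ht : 16 * r < dist c c')
    (D N : Finset (EuclideanSpace ℝ (Fin d)))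
    (hD : ∀ p ∈ D, dist c c' / 4 ≤ dist p c')
    (hN : (N.card : ℝ) ≤ δ ^ 2 / 4 * D.card) :
    ∑ p ∈ N, max (dist p c' - r) 0 ≤
      δ * (∑ p ∈ D, max (dist p c' - r) 0) +
        (1 + δ) * ∑ p ∈ N, max (dist p c - r) 0 := by
  set t := dist c c' with ht_def
  have ht0 : 0 < t := lt_of_le_of_lt (by positivity) ht
  have step1 : ∑ p ∈ N, max (dist p c' - r) 0 ≤
      (∑ p ∈ N, max (dist p c - r) 0) + (N.card : ℝ) * t := by
    have : ∑ p ∈ N, max (dist p c' - r) 0 ≤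
        ∑ p ∈ N, (max (dist p c - r) 0 + t) := by
      apply Finset.sum_le_sum
      intro p _
      apply max_le
      · have htri : dist p c' ≤ dist p c + t := dist_triangle p c c'
        have : dist p c - r ≤ max (dist p c - r) 0 := le_max_left _ _
        linarith
      · have : (0:ℝ) ≤ max (dist p c - r) 0 := le_max_right _ _
        linarith
    simpa [Finset.sum_add_distrib, Finset.sum_const, nsmul_eq_mul] using this
  have hsumD : (D.card : ℝ) * (t / 4 - r) ≤ ∑ p ∈ D, max (dist p c' - r) 0 := by
    have : ∑ p ∈ D, (t / 4 - r) ≤ ∑ p ∈ D, max (dist p c' - r) 0 := by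
      apply Finset.sum_le_sum
      intro p hp
      have := hD p hp
      have : dist p c' - r ≤ max (dist p c' - r) 0 := le_max_left _ _
      have h2 := hD p hp
      linarith
    rw [Finset.sum_const, nsmul_eq_mul] at this
    linarith
  have step2 : (N.card : ℝ) * t ≤ δ * ∑ p ∈ D, max (dist p c' - r) 0 := by
    have hDnn : (0:ℝ) ≤ (D.card : ℝ) := Nat.cast_nonneg _
    have haux : (0:ℝ) ≤ (1 - δ) * t / 4 - r := by
      nlinarith [mul_nonneg (show (0:ℝ) ≤ 1/2 - δ by linarith) ht0.le]
    have h1 := mul_le_mul_of_nonneg_left hsumD hδ0.le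
    have h2 : (N.card : ℝ) * t ≤ δ ^ 2 / 4 * D.card * t :=
      mul_le_mul_of_nonneg_right hN ht0.le
    have h3 : (0:ℝ) ≤ δ * D.card * ((1 - δ) * t / 4 - r) :=
      mul_nonneg (mul_nonneg hδ0.le hDnn) haux
    nlinarith [h1, h2, h3]
  have hNnn : (0:ℝ) ≤ ∑ p ∈ N, max (dist p c - r) 0 :=
    Finset.sum_nonneg fun p _ => le_max_right _ _
  nlinarith [step1, step2, mul_nonneg hδ0.le hNnn]
end

section
/- Let 0 < δ < 1/2 and r ≥ 0, let L ⊂ ℝ^d be finite and c* ∈ ℝ^d, and set L_near := {p ∈ L : dist(p, c*) ≤ 8r/δ} and L_far := L ∖ L_near. If |L_near| ≤ (δ/8)·|L_far|, then ∑_{p ∈ L} d_r(p, c*) ≤ ∑_{p ∈ L} dist(p, c*) ≤ (1 + 3δ/4)·∑_{p ∈ L} d_r(p, c*). (Claim 2.10: when most points of the cluster L are far from its center, the hybrid cost and the 1-median cost of L with center c* agree up to a 1+3δ/4 factor.) -/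
open Classical in
/-- Claim 2.10: when most points of the cluster `L` are far from its center
`c*`, the hybrid cost and the 1-median cost of `L` with center `c*` agree up
to a `1 + 3δ/4` factor. -/
theorem hybrid_vs_median_cluster {d : ℕ} (δ r : ℝ)
    (hδ0 : 0 < δ) (hδ1 : δ < 1 / 2) (hr : 0 ≤ r)
    (L : Finset (EuclideanSpace ℝ (Fin d))) (cs : EuclideanSpace ℝ (Fin d))
    (hsize : ((L.filter (fun p => dist p cs ≤ 8 * r / δ)).card : ℝ) ≤
      δ / 8 * (L \ L.filter (fun p => dist p cs ≤ 8 * r / δ)).card) :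
    (∑ p ∈ L, max (dist p cs - r) 0 ≤ ∑ p ∈ L, dist p cs) ∧
    (∑ p ∈ L, dist p cs ≤ (1 + 3 * δ / 4) * ∑ p ∈ L, max (dist p cs - r) 0) := by
  classical
  set N := L.filter (fun p => dist p cs ≤ 8 * r / δ) with hN
  have hrδ : r ≤ 8 * r / δ := by
    rw [le_div_iff₀ hδ0]
    nlinarith
  constructor
  · apply Finset.sum_le_sum
    intro p _
    have := dist_nonneg (x := p) (y := cs)
    exact max_le (by linarith) this
  · have hsplit : ∀ f : EuclideanSpace ℝ (Fin d) → ℝ,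
        ∑ p ∈ L, f p = ∑ p ∈ N, f p + ∑ p ∈ L \ N, f p := by
      intro f
      rw [hN, ← Finset.filter_not, Finset.sum_filter_add_sum_filter_not]
    have hA : ∑ p ∈ N, dist p cs ≤ (N.card : ℝ) * (8 * r / δ) := by
      have := Finset.sum_le_card_nsmul N (fun p => dist p cs) (8 * r / δ)
        (by intro p hp; exact (Finset.mem_filter.mp hp).2)
      simpa [nsmul_eq_mul] using this
    have hB : ((L \ N).card : ℝ) * (8 * r / δ) ≤ ∑ p ∈ L \ N, dist p cs := by
      have := Finset.card_nsmul_le_sum (L \ N) (fun p => dist p cs) (8 * r / δ)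
        (by
          intro p hp
          have hp' := Finset.mem_sdiff.mp hp
          have : ¬ dist p cs ≤ 8 * r / δ := by
            intro h
            exact hp'.2 (Finset.mem_filter.mpr ⟨hp'.1, h⟩)
          linarith)
      simpa [nsmul_eq_mul] using this
    have hmax : ∑ p ∈ L \ N, max (dist p cs - r) 0
        = ∑ p ∈ L \ N, dist p cs - ((L \ N).card : ℝ) * r := by
      have h1 : ∑ p ∈ L \ N, max (dist p cs - r) 0 = ∑ p ∈ L \ N, (dist p cs - r) := by
        apply Finset.sum_congr rfl
        intro p hp
        have hp' := Finset.mem_sdiff.mp hp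
        have h1 : ¬ dist p cs ≤ 8 * r / δ := by
          intro h
          exact hp'.2 (Finset.mem_filter.mpr ⟨hp'.1, h⟩)
        exact max_eq_left (by linarith)
      rw [h1, Finset.sum_sub_distrib, Finset.sum_const, nsmul_eq_mul]
    have hNonneg : (0:ℝ) ≤ ∑ p ∈ N, max (dist p cs - r) 0 :=
      Finset.sum_nonneg (fun p _ => le_max_right _ _)
    rw [hsplit (fun p => dist p cs), hsplit (fun p => max (dist p cs - r) 0), hmax]
    set n := ((L \ N).card : ℝ) with hn
    have hn0 : 0 ≤ n := by positivity
    have hrn : 0 ≤ r * n := by positivity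
    have key : (∑ p ∈ L \ N, dist p cs) * (3 * δ / 4) ≥ (2 + 3 * δ / 4) * (r * n) := by
      have h6 : 6 * (r * n) ≤ (∑ p ∈ L \ N, dist p cs) * (3 * δ / 4) := by
        have : n * (8 * r / δ) * (3 * δ / 4) ≤ (∑ p ∈ L \ N, dist p cs) * (3 * δ / 4) := by
          nlinarith
        calc 6 * (r * n) = n * (8 * r / δ) * (3 * δ / 4) := by
              field_simp; ring
          _ ≤ _ := this
      nlinarith
    have hA' : ∑ p ∈ N, dist p cs ≤ r * n := by
      calc ∑ p ∈ N, dist p cs ≤ (N.card : ℝ) * (8 * r / δ) := hA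
        _ ≤ (δ / 8 * n) * (8 * r / δ) := by
            apply mul_le_mul_of_nonneg_right hsize
            positivity
        _ = r * n := by field_simp
    nlinarith [Finset.sum_nonneg (fun p (_ : p ∈ L \ N) => dist_nonneg (x := p) (y := cs))]
end

section
/- Let 0 < δ < 1/2 and r ≥ 0, let L ⊂ ℝ^d be finite and c* ∈ ℝ^d, and set L_near := {p ∈ L : dist(p, c*) ≤ 8r/δ} and L_far := L ∖ L_near; assume |L_near| ≤ (δ/8)·|L_far|. Let c̃* ∈ ℝ^d be an optimal 1-median of L, i.e., ∑_{p ∈ L} dist(p, c̃*) ≤ ∑_{p ∈ L} dist(p, x) for every x ∈ ℝ^d, and let c₁ ∈ ℝ^d satisfy ∑_{p ∈ L} dist(p, c₁) ≤ (1 + δ/8)·∑_{p ∈ L} dist(p, c̃*). Then ∑_{p ∈ L} d_r(p, c₁) ≤ (1 + δ)·∑_{p ∈ L} d_r(p, c*). (Claim 2.11: a (1+δ/8)-approximate 1-median of L is a (1+δ)-approximate Hybrid 1-Median of L.) -/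
open Classical in
/-- Claim 2.11: if most points of `L` are far from `c*`, then a
`(1 + δ/8)`-approximate 1-median `c₁` of `L` is a `(1 + δ)`-approximate
Hybrid 1-Median of `L`. -/
theorem approx_median_is_approx_hybrid_median {d : ℕ} (δ r : ℝ)
    (hδ0 : 0 < δ) (hδ1 : δ < 1 / 2) (hr : 0 ≤ r)
    (L : Finset (EuclideanSpace ℝ (Fin d))) (cs : EuclideanSpace ℝ (Fin d))
    (hsize : ((L.filter (fun p => dist p cs ≤ 8 * r / δ)).card : ℝ) ≤
      δ / 8 * (L \ L.filter (fun p => dist p cs ≤ 8 * r / δ)).card)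
    (cts : EuclideanSpace ℝ (Fin d))
    (hopt : ∀ x : EuclideanSpace ℝ (Fin d),
      ∑ p ∈ L, dist p cts ≤ ∑ p ∈ L, dist p x)
    (c₁ : EuclideanSpace ℝ (Fin d))
    (happrox : ∑ p ∈ L, dist p c₁ ≤ (1 + δ / 8) * ∑ p ∈ L, dist p cts) :
    ∑ p ∈ L, max (dist p c₁ - r) 0 ≤
      (1 + δ) * ∑ p ∈ L, max (dist p cs - r) 0 := by
  set F := L.filter (fun p => dist p cs ≤ 8 * r / δ) with hF
  set S := ∑ p ∈ L, max (dist p cs - r) 0 with hSdef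
  set m : ℝ := ((L \ F).card : ℝ) with hmdef
  set n : ℝ := (L.card : ℝ) with hndef
  have hS : 0 ≤ S := Finset.sum_nonneg fun p _ => le_max_right _ _
  have hm : 0 ≤ m := Nat.cast_nonneg _
  -- step 1: hybrid cost of c₁ ≤ dist cost of c₁
  have h1 : ∑ p ∈ L, max (dist p c₁ - r) 0 ≤ ∑ p ∈ L, dist p c₁ :=
    Finset.sum_le_sum fun p _ => max_le (by linarith [dist_nonneg (x := p) (y := c₁)]) dist_nonneg
  -- step 2,3
  have h3 : ∑ p ∈ L, dist p c₁ ≤ (1 + δ / 8) * ∑ p ∈ L, dist p cs := by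
    have := hopt cs
    nlinarith [Finset.sum_nonneg (fun p (_ : p ∈ L) => dist_nonneg (x := p) (y := cts))]
  -- step 4: dist cost of cs ≤ S + n r
  have h4 : ∑ p ∈ L, dist p cs ≤ S + n * r := by
    have : ∑ p ∈ L, dist p cs ≤ ∑ p ∈ L, (max (dist p cs - r) 0 + r) :=
      Finset.sum_le_sum fun p _ => by
        have := le_max_left (dist p cs - r) 0; linarith
    simpa [Finset.sum_add_distrib, mul_comm] using this
  -- cardinality split
  have hn : n ≤ m + δ / 8 * m := by
    have hsub : F ⊆ L := Finset.filter_subset _ _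
    have := Finset.card_sdiff_add_card_eq_card hsub
    have : m + (F.card : ℝ) = n := by
      rw [hmdef, hndef, ← Nat.cast_add, this]
    linarith [hsize]
  -- far points contribute a lot
  have h6 : m * (8 * r / δ - r) ≤ S := by
    have hsum : ∑ p ∈ (L \ F), (8 * r / δ - r) ≤ ∑ p ∈ (L \ F), max (dist p cs - r) 0 := by
      refine Finset.sum_le_sum fun p hp => ?_
      have hpL : p ∈ L := (Finset.mem_sdiff.mp hp).1
      have hpF : ¬ (dist p cs ≤ 8 * r / δ) := by
        have := (Finset.mem_sdiff.mp hp).2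
        simpa [hF, Finset.mem_filter, hpL] using this
      push_neg at hpF
      have := le_max_left (dist p cs - r) 0
      linarith
    have hsub : ∑ p ∈ (L \ F), max (dist p cs - r) 0 ≤ S :=
      Finset.sum_le_sum_of_subset_of_nonneg (Finset.sdiff_subset)
        (fun p _ _ => le_max_right _ _)
    rw [Finset.sum_const, nsmul_eq_mul] at hsum
    linarith
  have h6' : m * (8 * r - δ * r) ≤ δ * S := by
    have h := mul_le_mul_of_nonneg_left h6 hδ0.le
    calc m * (8 * r - δ * r) = δ * (m * (8 * r / δ - r)) := by
          field_simp
      _ ≤ δ * S := h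
  have hmr : 0 ≤ m * r := mul_nonneg hm hr
  have hnr : n * r ≤ (m + δ / 8 * m) * r := mul_le_mul_of_nonneg_right hn hr
  nlinarith [mul_nonneg hδ0.le hS, mul_nonneg (mul_nonneg hδ0.le hδ0.le) hS,
    mul_le_mul_of_nonneg_left h6' hδ0.le]
end
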